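/- There is no complete non-singular fan-giving characteristic map of dimension 4 over the boundary complex of the 4-dimensional cyclic polytope with 7 vertices P*_[7] (the simplicial 4-polytope whose Gale diagram is the heptagon with all labels 1). Equivalently, the system of determinant conditions imposed by positivity on the 4×7 characteristic matrix (I₄ | v₅ v₆ v₇), where the maximal simplices and signs are as listed (1234:+, 1236:−, 1246:+, 1347:−, 1356:−, 1357:+, 1456:+, 1457:−, 2347:+, 2367:−, 2456:−, 2457:+, 2567:+, 3567:−), has no integer solution. -/

import Mathlib

/-- The `4 × 4` integer matrix whose columns are the vectors assigned by `lam` to the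
vertices `p, q, r, s` (in this order). -/
def colMat (lam : Fin 7 → Fin 4 → ℤ) (p q r s : Fin 7) : Matrix (Fin 4) (Fin 4) ℤ :=
  Matrix.of fun i j => lam (![p, q, r, s] j) i

theorem det_fin_four' (A : Matrix (Fin 4) (Fin 4) ℤ) :
    A.det =
      A 0 0 * (A 1 1 * (A 2 2 * A 3 3 - A 2 3 * A 3 2) - A 1 2 * (A 2 1 * A 3 3 - A 2 3 * A 3 1) + A 1 3 * (A 2 1 * A 3 2 - A 2 2 * A 3 1))
    - A 0 1 * (A 1 0 * (A 2 2 * A 3 3 - A 2 3 * A 3 2) - A 1 2 * (A 2 0 * A 3 3 - A 2 3 * A 3 0) + A 1 3 * (A 2 0 * A 3 2 - A 2 2 * A 3 0))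
    + A 0 2 * (A 1 0 * (A 2 1 * A 3 3 - A 2 3 * A 3 1) - A 1 1 * (A 2 0 * A 3 3 - A 2 3 * A 3 0) + A 1 3 * (A 2 0 * A 3 1 - A 2 1 * A 3 0))
    - A 0 3 * (A 1 0 * (A 2 1 * A 3 2 - A 2 2 * A 3 1) - A 1 1 * (A 2 0 * A 3 2 - A 2 2 * A 3 0) + A 1 2 * (A 2 0 * A 3 1 - A 2 1 * A 3 0)) := by
  rw [Matrix.det_succ_row_zero]
  simp [Fin.sum_univ_succ, Matrix.det_fin_three, Matrix.submatrix, Fin.succAbove,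
    show (Fin.succ 2 : Fin 4) = 3 from rfl, show (Fin.castSucc 2 : Fin 4) = 2 from rfl,
    show ((1 : Fin 4) < Fin.succ 2) from by decide]
  ring

/-- There is no complete non-singular fan-giving characteristic map of dimension `4`
over the boundary complex of the `4`-dimensional cyclic polytope with `7` vertices
`P*_[7]`: the system of determinant conditions imposed by positivity on the
characteristic matrix `(I₄ | v₅ v₆ v₇)` (signs `1234:+, 1236:−, 1246:+, 1347:−, 1356:−,
1357:+, 1456:+, 1457:−, 2347:+, 2367:−, 2456:−, 2457:+, 2567:+, 3567:−`, vertices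
`1, …, 7` indexed by `0, …, 6`) has no integer solution. -/
theorem no_toric_manifold_over_P7 :
    ¬ ∃ lam : Fin 7 → Fin 4 → ℤ,
      lam 0 = Pi.single 0 1 ∧ lam 1 = Pi.single 1 1 ∧
      lam 2 = Pi.single 2 1 ∧ lam 3 = Pi.single 3 1 ∧
      (colMat lam 0 1 2 3).det = 1 ∧
      (colMat lam 0 1 2 5).det = -1 ∧
      (colMat lam 0 1 3 5).det = 1 ∧
      (colMat lam 0 2 3 6).det = -1 ∧
      (colMat lam 0 2 4 5).det = -1 ∧
      (colMat lam 0 2 4 6).det = 1 ∧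
      (colMat lam 0 3 4 5).det = 1 ∧
      (colMat lam 0 3 4 6).det = -1 ∧
      (colMat lam 1 2 3 6).det = 1 ∧
      (colMat lam 1 2 5 6).det = -1 ∧
      (colMat lam 1 3 4 5).det = -1 ∧
      (colMat lam 1 3 4 6).det = 1 ∧
      (colMat lam 1 4 5 6).det = 1 ∧
      (colMat lam 2 4 5 6).det = -1 := by

  rintro ⟨lam, h0, h1, h2, h3, e1, e2, e3, e4, e5, e6, e7, e8, e9, e10, e11, e12, e13, e14⟩
  simp only [colMat, det_fin_four', Matrix.of_apply, Matrix.cons_val_zero,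
    Matrix.cons_val_one, Matrix.head_cons, Matrix.cons_val_two, Matrix.tail_cons,
    Matrix.cons_val_three, h0, h1, h2, h3, Pi.single_apply, Fin.isValue]
    at e2 e3 e4 e5 e6 e7 e8 e9 e10 e11 e12 e13 e14
  simp +decide [Fin.ext_iff] at e2 e3 e4 e5 e6 e7 e8 e9 e10 e11 e12 e13 e14
  -- notation: a_i = lam 4 i, b_i = lam 5 i, c_i = lam 6 i  (i = 0..3)
  set a1 := lam 4 0 with ha1d
  set a2 := lam 4 1 with ha2d
  set a3 := lam 4 2 with ha3d
  set a4 := lam 4 3 with ha4d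
  set b1 := lam 5 0 with hb1d
  set b2 := lam 5 1 with hb2d
  set b3 := lam 5 2 with hb3d
  set b4 := lam 5 3 with hb4d
  set c1 := lam 6 0 with hc1d
  set c2 := lam 6 1 with hc2d
  set c3 := lam 6 2 with hc3d
  set c4 := lam 6 3 with hc4d
  -- pinned values
  have hb4 : b4 = -1 := e2
  have hb3 : b3 = -1 := by linarith
  have hc2 : c2 = -1 := e4
  have hc1 : c1 = -1 := by linarith
  rw [hb4] at e5 e10 e13 e14
  rw [hb3] at e7 e11 e13
  rw [hc1] at e10 e12 e13 e14
  rw [hc2] at e6 e8 e14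
  -- b1 * c4 = 0
  have h0' : b1 * c4 = 0 := by linarith
  rcases mul_eq_zero.mp h0' with hb1 | hc4
  · -- case b1 = 0
    rw [hb1] at e11 e13 e14
    have hA1 : a1 = -1 := by linarith
    rw [hA1] at e12 e13 e14
    have hA3 : a3 = c3 - 1 := by linarith
    rw [hA3] at e7 e8 e12 e13
    have hA4 : a4 = c4 := by linarith
    rw [hA4] at e5 e6 e14
    have hu : (a2 + 1) * (-c4) = 1 := by linear_combination e6
    rcases Int.isUnit_iff.mp (IsUnit.of_mul_eq_one _ hu) with h | h
    · have hA2 : a2 = 0 := by linarith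
      rw [hA2] at e5 e6 e8 e14
      have hC4 : c4 = -1 := by linarith
      rw [hC4] at e5 e14
      linarith
    · have hA2 : a2 = -2 := by linarith
      rw [hA2] at e5 e6 e7 e8
      have hC4 : c4 = 1 := by linarith
      have hC3 : c3 = 0 := by linarith
      rw [hC4] at e5
      rw [hC3] at e7
      linarith
  · -- case c4 = 0
    rw [hc4] at e6 e13 e14
    have hA4 : a4 = -1 := by linarith
    rw [hA4] at e5 e13 e14
    have hbc : b1 * c3 = 1 := by linear_combination e13 - e12
    have hB1 : b1 = a1 := by linarith
    rw [hB1] at hbc e11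
    have hA3 : a3 = -2 := by linear_combination -e12 - hbc
    rw [hA3] at e7 e8 e11
    have hA1 : a1 = 1 := by linarith
    rw [hA1] at hbc
    have hC3 : c3 = 1 := by linarith
    rw [hC3] at e8
    linarith
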